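/- Let φ : [1, ∞) → (0, ∞) be an increasing submultiplicative function with φ(t₀) < t₀ for some t₀ > 1. Then for every x > 1, φ(x) ≤ t₀ · x^{1 + log(φ(t₀)/t₀)/log t₀}, and in particular φ(x) ≤ C x^γ with γ = 1 + log(φ(t₀)/t₀)/log t₀ < 1 and C = t₀. -/

import Mathlib

/-- Quantitative version of Lemma 2.5: if `φ(t₀) < t₀` for some `t₀ > 1`, then
`φ(x) ≤ t₀ · x ^ γ` for every `x > 1`, where `γ = 1 + log(φ(t₀)/t₀)/log t₀ < 1`. -/
theorem stmt_2 (φ : ℝ → ℝ) (t₀ : ℝ)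
    (hpos : ∀ t, 1 ≤ t → 0 < φ t)
    (hmono : MonotoneOn φ (Set.Ici 1))
    (hsub : ∀ t s, 1 ≤ t → 1 ≤ s → φ (t * s) ≤ φ t * φ s)
    (ht₀ : 1 < t₀) (hφt₀ : φ t₀ < t₀) :
    1 + Real.log (φ t₀ / t₀) / Real.log t₀ < 1 ∧
      ∀ x > (1 : ℝ), φ x ≤ t₀ * x ^ (1 + Real.log (φ t₀ / t₀) / Real.log t₀) := by
  have ht0' : (0:ℝ) < t₀ := by linarith
  have ha : 0 < φ t₀ := hpos t₀ ht₀.le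
  have hlt : 0 < Real.log t₀ := Real.log_pos ht₀
  have hγeq : 1 + Real.log (φ t₀ / t₀) / Real.log t₀
      = Real.log (φ t₀) / Real.log t₀ := by
    rw [Real.log_div ha.ne' (by positivity)]
    field_simp
    ring
  rw [hγeq]
  set γ := Real.log (φ t₀) / Real.log t₀ with hγdef
  have hγlt : γ < 1 := by
    rw [hγdef, div_lt_one hlt]
    exact Real.log_lt_log ha hφt₀
  have hrpow : t₀ ^ γ = φ t₀ := by
    have : γ = Real.logb t₀ (φ t₀) := by rw [Real.logb, hγdef]
    rw [this, Real.rpow_logb ht0' ht₀.ne' ha]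
  -- induction lemma
  have hind : ∀ n : ℕ, 1 ≤ n → φ (t₀ ^ n) ≤ φ t₀ ^ n := by
    intro n hn
    induction n with
    | zero => omega
    | succ m ih =>
      rcases Nat.eq_or_lt_of_le hn with h | h
      · simp [← h]
      · have hm : 1 ≤ m := by omega
        have ht₀m : (1:ℝ) ≤ t₀ ^ m := one_le_pow₀ ht₀.le
        calc φ (t₀ ^ (m+1)) = φ (t₀ ^ m * t₀) := by ring_nf
          _ ≤ φ (t₀ ^ m) * φ t₀ := hsub _ _ ht₀m ht₀.le
          _ ≤ φ t₀ ^ m * φ t₀ := by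
              exact mul_le_mul_of_nonneg_right (ih hm) ha.le
          _ = φ t₀ ^ (m+1) := by ring
  refine ⟨hγlt, fun x hx => ?_⟩
  have hx0 : (0:ℝ) < x := by linarith
  set L := Real.logb t₀ x with hLdef
  have hL0 : 0 < L := Real.logb_pos ht₀ hx
  have hxL : t₀ ^ L = x := Real.rpow_logb ht0' ht₀.ne' hx0
  set n := ⌈L⌉₊ with hndef
  have hn1 : 1 ≤ n := Nat.one_le_ceil_iff.mpr hL0
  have hLn : L ≤ (n:ℝ) := Nat.le_ceil L
  have hnL : (n:ℝ) < L + 1 := by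
    have := Nat.ceil_lt_add_one hL0.le
    exact this
  have hxle : x ≤ t₀ ^ n := by
    rw [← hxL, ← Real.rpow_natCast t₀ n]
    exact Real.rpow_le_rpow_of_exponent_le ht₀.le hLn
  have h1 : φ x ≤ φ (t₀ ^ n) := hmono (Set.mem_Ici.mpr hx.le)
    (Set.mem_Ici.mpr (one_le_pow₀ ht₀.le)) hxle
  have h2 : φ (t₀ ^ n) ≤ φ t₀ ^ n := hind n hn1
  have h3 : φ t₀ ^ n = t₀ ^ (γ * n) := by
    rw [← hrpow, ← Real.rpow_natCast (t₀ ^ γ), ← Real.rpow_mul ht0'.le]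
  have hkey : γ * n ≤ 1 + γ * L := by
    rcases le_or_gt 0 γ with hγ0 | hγ0
    · nlinarith
    · nlinarith
  have h4 : t₀ ^ (γ * (n:ℝ)) ≤ t₀ ^ (1 + γ * L) :=
    Real.rpow_le_rpow_of_exponent_le ht₀.le hkey
  have h5 : t₀ ^ (1 + γ * L) = t₀ * x ^ γ := by
    rw [Real.rpow_add ht0', Real.rpow_one, mul_comm γ L, Real.rpow_mul ht0'.le, hxL]
  linarith [h1, h2, h3 ▸ h2, h4, h5 ▸ h4]
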